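/- In oriented Bernoulli percolation on L at parameter p, for any Δ > δ > 1 there exists C > 0 such that for all m, n ≥ 1: max{V_p(Δm, n), H_p(m, Δn)} ≤ 1 − (1 − max{V_p(δm, n), H_p(m, δn)})^C. -/

import Mathlib

open MeasureTheory

namespace OrientedPerc

/-- Vertices of the plane; the lattice `L` consists of those with even coordinate sum. -/
abbrev Vtx := ℤ × ℤ

/-- An oriented edge is given by its base vertex and a direction:
`true` for the edge to `x + (1,1)`, `false` for the edge to `x + (-1,1)`. -/
abbrev Edge := Vtx × Bool

/-- A percolation configuration: each oriented edge is open (`true`) or closed. -/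
abbrev Config := Edge → Bool

/-- The endpoint of an oriented edge. -/
def tip (e : Edge) : Vtx := e.1 + (if e.2 then (1, 1) else (-1, 1))

/-- One open oriented step from `x` to `y`. -/
def Step (ω : Config) (x y : Vtx) : Prop :=
  ∃ b : Bool, ω (x, b) = true ∧ y = tip (x, b)

/-- `x → y`: there is an open oriented path from `x` to `y`. -/
def Conn (ω : Config) (x y : Vtx) : Prop := Relation.ReflTransGen (Step ω) x y

/-- `x → y` using only vertices in the set `S`. -/
def ConnIn (S : Set Vtx) (ω : Config) (x y : Vtx) : Prop :=
  x ∈ S ∧ Relation.ReflTransGen (fun a b => Step ω a b ∧ b ∈ S) x y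

/-- The box `[a,b] × [c,d]` intersected with the lattice `L`. -/
def box (a b c d : ℤ) : Set Vtx :=
  {v | a ≤ v.1 ∧ v.1 ≤ b ∧ c ≤ v.2 ∧ v.2 ≤ d ∧ Even (v.1 + v.2)}

/-- The box `[a,b] × [c,d]` is crossed vertically (bottom to top). -/
def CrossedVert (ω : Config) (a b c d : ℤ) : Prop :=
  ∃ x y : Vtx, x.2 = c ∧ y.2 = d ∧ ConnIn (box a b c d) ω x y

/-- The box `[a,b] × [c,d]` is crossed from left to right. -/
def CrossedLR (ω : Config) (a b c d : ℤ) : Prop :=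
  ∃ x y : Vtx, x.1 = a ∧ y.1 = b ∧ ConnIn (box a b c d) ω x y

/-- `μ` is Bernoulli oriented bond percolation with parameter `p`:
the states of edges are i.i.d., each open with probability `p`. -/
def IsBernoulli (μ : Measure Config) (p : ℝ) : Prop :=
  IsProbabilityMeasure μ ∧ p ∈ Set.Icc (0 : ℝ) 1 ∧
    ∀ (s : Finset Edge) (f : Edge → Bool),
      (μ {ω | ∀ e ∈ s, ω e = f e}).toReal = ∏ e ∈ s, (if f e then p else 1 - p)

/-- Probability of a vertical crossing of `[0,m] × [0,n]`. -/
noncomputable def V (μ : Measure Config) (m n : ℕ) : ℝ :=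
  (μ {ω | CrossedVert ω 0 (m : ℤ) 0 (n : ℤ)}).toReal

/-- Probability of a left-right crossing of `[0,m] × [0,n]`. -/
noncomputable def H (μ : Measure Config) (m n : ℕ) : ℝ :=
  (μ {ω | CrossedLR ω 0 (m : ℤ) 0 (n : ℤ)}).toReal

/-- The event `R_n ≥ t`: some `(y,0)` with `y ≤ 0` even is connected to some
`(x,n)` with `x ≥ t`. -/
def Rge (ω : Config) (n t : ℤ) : Prop :=
  ∃ x y : ℤ, Even y ∧ y ≤ 0 ∧ t ≤ x ∧ Conn ω (y, 0) (x, n)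

/-- The event `0 → ℓ_n`. -/
def ConnToLine (ω : Config) (n : ℤ) : Prop := ∃ x : ℤ, Conn ω (0, 0) (x, n)


-- Auxiliary development

lemma step_coords {ω : Config} {x y : Vtx} (h : Step ω x y) :
    y.2 = x.2 + 1 ∧ (y.1 = x.1 + 1 ∨ y.1 = x.1 - 1) := by
  obtain ⟨b, -, rfl⟩ := h
  cases b <;> simp [tip] <;> ring

lemma connIn_exists_fn {S : Set Vtx} {ω : Config} {x y : Vtx} (h : ConnIn S ω x y) :
    ∃ (L : ℕ) (f : ℕ → Vtx), f 0 = x ∧ f L = y ∧ (∀ i, i ≤ L → f i ∈ S) ∧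
      (∀ i, i < L → Step ω (f i) (f (i+1))) := by
  obtain ⟨hxS, hr⟩ := h
  induction hr with
  | refl =>
      exact ⟨0, fun _ => x, rfl, rfl, fun i hi => by simpa using hxS, fun i hi => by omega⟩
  | @tail b c h1 h2 ih =>
      obtain ⟨L, f, hf0, hfL, hmem, hstep⟩ := ih
      refine ⟨L + 1, fun i => if i ≤ L then f i else c, by simp [hf0], by simp, ?_, ?_⟩
      · intro i hi
        by_cases h : i ≤ L
        · simpa [h] using hmem i h
        · simpa [h] using h2.2
      · intro i hi
        by_cases h : i < L
        · simpa [Nat.le_of_lt h, h.le, Nat.succ_le_of_lt h] using hstep i h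
        · have : i = L := by omega
          subst this
          simpa [hfL] using h2.1

lemma connIn_of_fn {S : Set Vtx} {ω : Config} (f : ℕ → Vtx) (A : ℕ) :
    ∀ B, A ≤ B → (∀ i, A ≤ i → i ≤ B → f i ∈ S) →
    (∀ i, A ≤ i → i < B → Step ω (f i) (f (i+1))) → ConnIn S ω (f A) (f B) := by
  intro B
  induction B with
  | zero =>
      intro hAB hmem _
      have hA : A = 0 := by omega
      subst hA
      exact ⟨hmem 0 le_rfl le_rfl, .refl⟩
  | succ B ih =>
      intro hAB hmem hstep
      rcases Nat.lt_or_ge A (B+1) with h | h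
      · have hAB' : A ≤ B := by omega
        have prev := ih hAB' (fun i a b => hmem i a (by omega)) (fun i a b => hstep i a (by omega))
        exact ⟨prev.1, prev.2.tail ⟨hstep B hAB' (by omega), hmem (B+1) (by omega) le_rfl⟩⟩
      · have hA : A = B + 1 := by omega
        subst hA
        exact ⟨hmem _ le_rfl le_rfl, .refl⟩

lemma walk_ivt (g : ℕ → ℤ) (A : ℕ) (v : ℤ) :
    ∀ B, A ≤ B → (∀ i, A ≤ i → i < B → g (i+1) = g i + 1 ∨ g (i+1) = g i - 1) →
    g A ≤ v → v ≤ g B → ∃ c, A ≤ c ∧ c ≤ B ∧ g c = v := by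
  intro B
  induction B with
  | zero =>
      intro hAB _ h1 h2
      have hA : A = 0 := by omega
      subst hA
      exact ⟨0, le_rfl, le_rfl, by omega⟩
  | succ B ih =>
      intro hAB hstep h1 h2
      rcases Nat.lt_or_ge A (B+1) with h | h
      · have hAB' : A ≤ B := by omega
        rcases le_or_gt v (g B) with hv | hv
        · obtain ⟨c, hc1, hc2, hc3⟩ := ih hAB' (fun i a b => hstep i a (by omega)) h1 hv
          exact ⟨c, hc1, by omega, hc3⟩
        · have hs := hstep B hAB' (by omega)
          exact ⟨B+1, by omega, le_rfl, by omega⟩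
      · have hA : A = B + 1 := by omega
        subst hA
        exact ⟨B+1, le_rfl, le_rfl, by omega⟩

lemma walk_ivt' (g : ℕ → ℤ) (A B : ℕ) (v : ℤ) (hAB : A ≤ B)
    (hstep : ∀ i, A ≤ i → i < B → g (i+1) = g i + 1 ∨ g (i+1) = g i - 1)
    (h1 : v ≤ g A) (h2 : g B ≤ v) : ∃ c, A ≤ c ∧ c ≤ B ∧ g c = v := by
  obtain ⟨c, hc1, hc2, hc3⟩ := walk_ivt (fun i => - g i) A (-v) B hAB
    (fun i a b => by have := hstep i a b; (try dsimp only); omega) (by (try dsimp only); omega)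
    (by (try dsimp only); omega)
  exact ⟨c, hc1, hc2, by omega⟩

lemma walk_corridor (g : ℕ → ℤ) (A B : ℕ) (hAB : A ≤ B)
    (hstep : ∀ i, A ≤ i → i < B → g (i+1) = g i + 1 ∨ g (i+1) = g i - 1)
    (lo hi : ℤ) (hA : g A = lo) (hB : g B = hi) (hlh : lo ≤ hi) :
    ∃ u v, A ≤ u ∧ u ≤ v ∧ v ≤ B ∧ g u = lo ∧ g v = hi ∧
      ∀ t, u ≤ t → t ≤ v → lo ≤ g t ∧ g t ≤ hi := by
  classical
  set T : Finset ℕ := (Finset.Icc A B).filter (fun t => g t = lo) with hT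
  have hTne : T.Nonempty := ⟨A, by simp [hT, hAB, hA]⟩
  set u := T.max' hTne with hu
  have huT : u ∈ T := T.max'_mem hTne
  have huIcc : A ≤ u ∧ u ≤ B := by
    have := (Finset.mem_filter.mp huT).1
    exact ⟨(Finset.mem_Icc.mp this).1, (Finset.mem_Icc.mp this).2⟩
  have hgu : g u = lo := (Finset.mem_filter.mp huT).2
  have hstep' : ∀ i, u ≤ i → i < B → g (i+1) = g i + 1 ∨ g (i+1) = g i - 1 :=
    fun i a b => hstep i (le_trans huIcc.1 a) b
  obtain ⟨c, hc1, hc2, hc3⟩ := walk_ivt g u hi B huIcc.2 hstep' (by omega) (by omega)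
  set S2 : Finset ℕ := (Finset.Icc u B).filter (fun t => g t = hi) with hS2
  have hS2ne : S2.Nonempty := ⟨c, by simp [hS2, hc1, hc2, hc3]⟩
  set v := S2.min' hS2ne with hv
  have hvS : v ∈ S2 := S2.min'_mem hS2ne
  have hvIcc : u ≤ v ∧ v ≤ B := by
    have := (Finset.mem_filter.mp hvS).1
    exact ⟨(Finset.mem_Icc.mp this).1, (Finset.mem_Icc.mp this).2⟩
  have hgv : g v = hi := (Finset.mem_filter.mp hvS).2
  refine ⟨u, v, huIcc.1, hvIcc.1, hvIcc.2, hgu, hgv, ?_⟩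
  intro t ht1 ht2
  constructor
  · by_contra hcon
    push_neg at hcon
    have htu : u < t := by
      rcases Nat.lt_or_ge u t with h | h
      · exact h
      · have : t = u := by omega
        subst this
        omega
    obtain ⟨s, hs1, hs2, hs3⟩ := walk_ivt g t lo v (by omega)
      (fun i a b => hstep i (by omega) (by omega)) (by omega) (by omega)
    have hsT : s ∈ T := by
      simp only [hT, Finset.mem_filter, Finset.mem_Icc]
      exact ⟨⟨by omega, by omega⟩, hs3⟩
    have := T.le_max' s hsT
    omega
  · by_contra hcon
    push_neg at hcon
    have htv : t < v := by
      rcases Nat.lt_or_ge t v with h | h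
      · exact h
      · have : t = v := by omega
        subst this
        omega
    obtain ⟨s, hs1, hs2, hs3⟩ := walk_ivt g u hi t (by omega)
      (fun i a b => hstep i (by omega) (by omega)) (by omega) (by omega)
    have hsS : s ∈ S2 := by
      simp only [hS2, Finset.mem_filter, Finset.mem_Icc]
      exact ⟨⟨by omega, by omega⟩, hs3⟩
    have := S2.min'_le s hsS
    omega

lemma walk_corridor' (g : ℕ → ℤ) (A B : ℕ) (hAB : A ≤ B)
    (hstep : ∀ i, A ≤ i → i < B → g (i+1) = g i + 1 ∨ g (i+1) = g i - 1)
    (lo hi : ℤ) (hA : g A = hi) (hB : g B = lo) (hlh : lo ≤ hi) :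
    ∃ u v, A ≤ u ∧ u ≤ v ∧ v ≤ B ∧ g u = hi ∧ g v = lo ∧
      ∀ t, u ≤ t → t ≤ v → lo ≤ g t ∧ g t ≤ hi := by
  obtain ⟨u, v, h1, h2, h3, h4, h5, h6⟩ := walk_corridor (fun i => - g i) A B hAB
    (fun i a b => by have := hstep i a b; (try dsimp only); omega) (-hi) (-lo)
    (by (try dsimp only); omega) (by (try dsimp only); omega) (by omega)
  refine ⟨u, v, h1, h2, h3, by omega, by omega, ?_⟩
  intro t a b
  have := h6 t a b
  skip
  omega

open scoped Classical

def DeterminedBy (A : Set Config) (s : Finset Edge) : Prop :=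
  ∀ ω ω' : Config, (∀ e ∈ s, ω e = ω' e) → (ω ∈ A ↔ ω' ∈ A)

lemma DeterminedBy.mono {A : Set Config} {s s' : Finset Edge} (h : DeterminedBy A s)
    (hss : s ⊆ s') : DeterminedBy A s' :=
  fun ω ω' hag => h ω ω' (fun e he => hag e (hss he))

def Incr (A : Set Config) : Prop :=
  ∀ ω ω' : Config, (∀ e, ω e = true → ω' e = true) → ω ∈ A → ω' ∈ A

def Decr (A : Set Config) : Prop :=
  ∀ ω ω' : Config, (∀ e, ω e = true → ω' e = true) → ω' ∈ A → ω ∈ A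

noncomputable def indc (t : Finset Edge) : Config := fun e => decide (e ∈ t)

def cyl (s t : Finset Edge) : Set Config := {ω | ∀ e ∈ s, ω e = indc t e}

lemma cyl_measurable (s t : Finset Edge) : MeasurableSet (cyl s t) := by
  have : cyl s t = ⋂ e ∈ (s : Set Edge), (fun ω : Config => ω e) ⁻¹' {indc t e} := by
    ext ω; simp [cyl]
  rw [this]
  exact MeasurableSet.biInter s.countable_toSet
    (fun e _ => (measurable_pi_apply e) (measurableSet_singleton _))

lemma determined_eq_biUnion {A : Set Config} {s : Finset Edge} (hA : DeterminedBy A s) :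
    A = ⋃ t ∈ s.powerset.filter (fun t => indc t ∈ A), cyl s t := by
  ext ω
  simp only [Set.mem_iUnion, exists_prop, Finset.mem_filter, Finset.mem_powerset]
  constructor
  · intro hω
    refine ⟨s.filter (fun e => ω e = true), ⟨Finset.filter_subset _ _, ?_⟩, ?_⟩
    · exact (hA ω _ (fun e he => by
        simp only [indc, Finset.mem_filter]
        cases h : ω e <;> simp [he, h])).mp hω
    · intro e he
      simp only [indc, Finset.mem_filter]
      cases h : ω e <;> simp [he, h]
  · rintro ⟨t, ⟨hts, hind⟩, hcyl⟩
    exact (hA _ ω (fun e he => (hcyl e he).symm)).mp hind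

lemma measurableSet_of_determined {A : Set Config} {s : Finset Edge}
    (hA : DeterminedBy A s) : MeasurableSet A := by
  rw [determined_eq_biUnion hA]
  exact Finset.measurableSet_biUnion _ (fun t _ => cyl_measurable s t)

noncomputable def wt (p : ℝ) (s t : Finset Edge) : ℝ := ∏ e ∈ s, (if e ∈ t then p else 1 - p)

lemma wt_nonneg {p : ℝ} (hp0 : 0 ≤ p) (hp1 : p ≤ 1) (s t : Finset Edge) : 0 ≤ wt p s t :=
  Finset.prod_nonneg (fun e _ => by split <;> linarith)

lemma cyl_disjoint {s t t' : Finset Edge} (hts : t ⊆ s) (hts' : t' ⊆ s) (hne : t ≠ t') :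
    Disjoint (cyl s t) (cyl s t') := by
  rw [Set.disjoint_left]
  intro ω h1 h2
  apply hne
  ext e
  constructor
  · intro he
    have hes := hts he
    have := (h1 e hes).symm.trans (h2 e hes)
    simpa [indc, he] using this.symm
  · intro he
    have hes := hts' he
    have := (h1 e hes).symm.trans (h2 e hes)
    simpa [indc, he] using this

lemma measure_cyl {μ : Measure Config} {p : ℝ} (hB : IsBernoulli μ p) (s t : Finset Edge) :
    (μ (cyl s t)).toReal = wt p s t := by
  have := hB.2.2 s (indc t)
  rw [show {ω : Config | ∀ e ∈ s, ω e = indc t e} = cyl s t from rfl] at this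
  rw [this, wt]
  exact Finset.prod_congr rfl (fun e _ => by
    by_cases h : e ∈ t <;> simp [indc, h])

lemma measure_determined {μ : Measure Config} {p : ℝ} (hB : IsBernoulli μ p)
    {A : Set Config} {s : Finset Edge} (hA : DeterminedBy A s) :
    (μ A).toReal = ∑ t ∈ s.powerset.filter (fun t => indc t ∈ A), wt p s t := by
  haveI := hB.1
  conv_lhs => rw [determined_eq_biUnion hA]
  rw [measure_biUnion_finset ?disj (fun t _ => cyl_measurable s t)]
  · rw [ENNReal.toReal_sum (fun t _ => measure_ne_top μ _)]
    exact Finset.sum_congr rfl (fun t _ => measure_cyl hB s t)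
  case disj =>
    intro t ht t' ht' hne
    simp only [Finset.coe_filter, Set.mem_setOf_eq, Finset.mem_powerset] at ht ht'
    exact cyl_disjoint ht.1 ht'.1 hne

lemma indc_precomp (σ : Edge ≃ Edge) (t : Finset Edge) :
    (fun e => indc t (σ e)) = indc (t.image σ.symm) := by
  funext e
  simp only [indc, decide_eq_decide, Finset.mem_image]
  constructor
  · intro h; exact ⟨σ e, h, σ.symm_apply_apply e⟩
  · rintro ⟨a, ha, rfl⟩; simpa using ha

lemma measure_precomp {μ : Measure Config} {p : ℝ} (hB : IsBernoulli μ p)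
    (σ : Edge ≃ Edge) {A : Set Config} {s : Finset Edge} (hA : DeterminedBy A s) :
    (μ {ω | (fun e => ω (σ e)) ∈ A}).toReal = (μ A).toReal := by
  set A' : Set Config := {ω | (fun e => ω (σ e)) ∈ A} with hA'def
  have hA' : DeterminedBy A' (s.image σ) := by
    intro ω ω' hag
    exact hA _ _ (fun e he => hag (σ e) (Finset.mem_image_of_mem σ he))
  rw [measure_determined hB hA', measure_determined hB hA]
  refine Finset.sum_nbij' (fun t => t.image σ.symm) (fun t => t.image σ) ?_ ?_ ?_ ?_ ?_
  · intro t ht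
    simp only [Finset.mem_filter, Finset.mem_powerset] at ht ⊢
    constructor
    · intro e he
      obtain ⟨a, ha, rfl⟩ := Finset.mem_image.mp he
      obtain ⟨b, hb, rfl⟩ := Finset.mem_image.mp (ht.1 ha)
      simpa using hb
    · have := ht.2
      rw [hA'def, Set.mem_setOf_eq, indc_precomp σ t] at this
      exact this
  · intro t ht
    simp only [Finset.mem_filter, Finset.mem_powerset] at ht ⊢
    constructor
    · intro e he
      obtain ⟨a, ha, rfl⟩ := Finset.mem_image.mp he
      exact Finset.mem_image_of_mem σ (ht.1 ha)
    · rw [hA'def, Set.mem_setOf_eq, indc_precomp σ, Finset.image_image]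
      have : (t.image (σ.symm ∘ σ)) = t := by
        rw [show σ.symm ∘ σ = id from funext (fun x => σ.symm_apply_apply x), Finset.image_id]
      rw [this]
      exact ht.2
  · intro t ht
    simp [Finset.image_image, Function.comp_def]
  · intro t ht
    simp [Finset.image_image, Function.comp_def]
  · intro t ht
    simp only [Finset.mem_filter, Finset.mem_powerset] at ht
    rw [wt, wt, Finset.prod_image (fun a _ b _ h => σ.injective h)]
    refine Finset.prod_congr rfl (fun e _ => ?_)
    congr 1
    simp only [Finset.mem_image, eq_iff_iff]
    constructor
    · intro h; exact ⟨σ e, h, σ.symm_apply_apply e⟩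
    · rintro ⟨a, ha, rfl⟩; simpa using ha

noncomputable def ES (p : ℝ) (s : Finset Edge) (F : Config → ℝ) : ℝ :=
  ∑ t ∈ s.powerset, wt p s t * F (indc t)

lemma indc_insert (e : Edge) (t : Finset Edge) :
    indc (insert e t) = Function.update (indc t) e true := by
  funext x
  by_cases h : x = e
  · subst h; simp [indc]
  · simp [indc, Function.update, h]

lemma ES_insert (p : ℝ) {e : Edge} {s : Finset Edge} (he : e ∉ s) (F : Config → ℝ) :
    ES p (insert e s) F
      = (1 - p) * ES p s F + p * ES p s (fun ω => F (Function.update ω e true)) := by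
  rw [ES, Finset.sum_powerset_insert he]
  congr 1
  · rw [ES, Finset.mul_sum]
    refine Finset.sum_congr rfl (fun t ht => ?_)
    have hts := Finset.mem_powerset.mp ht
    have het : e ∉ t := fun h => he (hts h)
    rw [wt, Finset.prod_insert he, if_neg het, ← wt]
    ring
  · rw [ES, Finset.mul_sum]
    refine Finset.sum_congr rfl (fun t ht => ?_)
    have hts := Finset.mem_powerset.mp ht
    have het : e ∉ t := fun h => he (hts h)
    rw [wt, Finset.prod_insert he, if_pos (Finset.mem_insert_self e t)]
    have : ∏ x ∈ s, (if x ∈ insert e t then p else 1 - p) = wt p s t := by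
      refine Finset.prod_congr rfl (fun x hx => ?_)
      have hxe : x ≠ e := fun h => he (h ▸ hx)
      simp [Finset.mem_insert, hxe]
    rw [this, indc_insert]
    ring

lemma ES_mono (p : ℝ) (hp0 : 0 ≤ p) (hp1 : p ≤ 1) (s : Finset Edge) (F G : Config → ℝ)
    (h : ∀ ω, F ω ≤ G ω) : ES p s F ≤ ES p s G :=
  Finset.sum_le_sum (fun t _ =>
    mul_le_mul_of_nonneg_left (h _) (wt_nonneg hp0 hp1 s t))

lemma harris_aux (p : ℝ) (hp0 : 0 ≤ p) (hp1 : p ≤ 1) (s : Finset Edge) :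
    ∀ (F G : Config → ℝ),
    (∀ ω ω', (∀ e, ω e = true → ω' e = true) → F ω' ≤ F ω) →
    (∀ ω ω', (∀ e, ω e = true → ω' e = true) → G ω' ≤ G ω) →
    ES p s F * ES p s G ≤ ES p s (fun ω => F ω * G ω) := by
  induction s using Finset.induction_on with
  | empty =>
      intro F G hF hG
      simp [ES, wt]
  | @insert e s he ih =>
      intro F G hF hG
      have hupd : ∀ ω : Config, ∀ x, ω x = true → Function.update ω e true x = true := by
        intro ω x hx
        by_cases h : x = e
        · subst h; simp
        · simp [Function.update, h, hx]
      have hFdec : ∀ ω ω', (∀ x, ω x = true → ω' x = true) →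
          F (Function.update ω' e true) ≤ F (Function.update ω e true) := by
        intro ω ω' hle
        refine hF _ _ (fun x hx => ?_)
        by_cases h : x = e
        · subst h; simp
        · simp only [Function.update, dif_neg h] at hx ⊢
          exact hle x hx
      have hGdec : ∀ ω ω', (∀ x, ω x = true → ω' x = true) →
          G (Function.update ω' e true) ≤ G (Function.update ω e true) := by
        intro ω ω' hle
        refine hG _ _ (fun x hx => ?_)
        by_cases h : x = e
        · subst h; simp
        · simp only [Function.update, dif_neg h] at hx ⊢
          exact hle x hx
      have h1 := ih F G hF hG
      have h2 := ih (fun ω => F (Function.update ω e true))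
        (fun ω => G (Function.update ω e true)) hFdec hGdec
      have haF : ES p s (fun ω => F (Function.update ω e true)) ≤ ES p s F :=
        ES_mono p hp0 hp1 s _ _ (fun ω => hF ω (Function.update ω e true) (hupd ω))
      have haG : ES p s (fun ω => G (Function.update ω e true)) ≤ ES p s G :=
        ES_mono p hp0 hp1 s _ _ (fun ω => hG ω (Function.update ω e true) (hupd ω))
      rw [ES_insert p he F, ES_insert p he G, ES_insert p he (fun ω => F ω * G ω)]
      set a0 := ES p s F
      set a1 := ES p s (fun ω => F (Function.update ω e true))
      set b0 := ES p s G
      set b1 := ES p s (fun ω => G (Function.update ω e true))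
      have h2' : a1 * b1 ≤ ES p s (fun ω =>
          F (Function.update ω e true) * G (Function.update ω e true)) := h2
      calc ((1-p) * a0 + p * a1) * ((1-p) * b0 + p * b1)
          ≤ (1-p) * (a0 * b0) + p * (a1 * b1) := by nlinarith [mul_nonneg (mul_nonneg hp0 (by linarith : (0:ℝ) ≤ 1 - p)) (mul_nonneg (sub_nonneg.mpr haF) (sub_nonneg.mpr haG))]
        _ ≤ (1-p) * ES p s (fun ω => F ω * G ω) + p * ES p s (fun ω =>
              F (Function.update ω e true) * G (Function.update ω e true)) := by
            have hp' : (0:ℝ) ≤ 1 - p := by linarith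
            exact add_le_add (mul_le_mul_of_nonneg_left h1 hp')
              (mul_le_mul_of_nonneg_left h2' hp0)
        _ = _ := rfl

noncomputable def indicator01 (A : Set Config) : Config → ℝ := fun ω => if ω ∈ A then 1 else 0

lemma ES_indicator {μ : Measure Config} {p : ℝ} (hB : IsBernoulli μ p)
    {A : Set Config} {s : Finset Edge} (hA : DeterminedBy A s) :
    ES p s (indicator01 A) = (μ A).toReal := by
  rw [measure_determined hB hA, Finset.sum_filter, ES]
  refine Finset.sum_congr rfl (fun t _ => ?_)
  by_cases h : indc t ∈ A <;> simp [indicator01, h]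

lemma harris_list {μ : Measure Config} {p : ℝ} (hB : IsBernoulli μ p) (s : Finset Edge) :
    ∀ l : List (Set Config), (∀ A ∈ l, DeterminedBy A s ∧ Decr A) →
      (l.map (fun A => (μ A).toReal)).prod ≤ (μ {ω | ∀ A ∈ l, ω ∈ A}).toReal := by
  haveI := hB.1
  obtain ⟨hp0, hp1⟩ := hB.2.1
  intro l
  induction l with
  | nil =>
      intro _
      simp only [List.map_nil, List.prod_nil]
      have : {ω : Config | ∀ A ∈ ([] : List (Set Config)), ω ∈ A} = Set.univ := by
        ext ω; simp
      rw [this]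
      simp
  | cons D l ih =>
      intro hl
      have hD := hl D List.mem_cons_self
      have hrest : ∀ A ∈ l, DeterminedBy A s ∧ Decr A :=
        fun A hA => hl A (List.mem_cons_of_mem _ hA)
      have hRdet : DeterminedBy {ω | ∀ A ∈ l, ω ∈ A} s := by
        intro ω ω' hag
        constructor
        · intro h A hA; exact ((hrest A hA).1 ω ω' hag).mp (h A hA)
        · intro h A hA; exact ((hrest A hA).1 ω ω' hag).mpr (h A hA)
      have hRdec : Decr {ω | ∀ A ∈ l, ω ∈ A} :=
        fun ω ω' hle hmem A hA => (hrest A hA).2 ω ω' hle (hmem A hA)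
      have hIdet : DeterminedBy (D ∩ {ω | ∀ A ∈ l, ω ∈ A}) s := by
        intro ω ω' hag
        constructor
        · rintro ⟨h1, h2⟩; exact ⟨(hD.1 ω ω' hag).mp h1, (hRdet ω ω' hag).mp h2⟩
        · rintro ⟨h1, h2⟩; exact ⟨(hD.1 ω ω' hag).mpr h1, (hRdet ω ω' hag).mpr h2⟩
      have hFdec : ∀ ω ω', (∀ e, ω e = true → ω' e = true) →
          indicator01 D ω' ≤ indicator01 D ω := by
        intro ω ω' hle
        by_cases h : ω' ∈ D
        · have := hD.2 ω ω' hle h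
          simp [indicator01, h, this]
        · simp only [indicator01, if_neg h]
          split <;> norm_num
      have hGdec : ∀ ω ω', (∀ e, ω e = true → ω' e = true) →
          indicator01 {ω | ∀ A ∈ l, ω ∈ A} ω' ≤ indicator01 {ω | ∀ A ∈ l, ω ∈ A} ω := by
        intro ω ω' hle
        by_cases h : ω' ∈ {ω | ∀ A ∈ l, ω ∈ A}
        · have := hRdec ω ω' hle h
          simp [indicator01, h, this]
        · simp only [indicator01, if_neg h]
          split <;> norm_num
      have key := harris_aux p hp0 hp1 s (indicator01 D)
        (indicator01 {ω | ∀ A ∈ l, ω ∈ A}) hFdec hGdec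
      have hmul : (fun ω => indicator01 D ω * indicator01 {ω | ∀ A ∈ l, ω ∈ A} ω)
          = indicator01 (D ∩ {ω | ∀ A ∈ l, ω ∈ A}) := by
        funext ω
        by_cases h1 : ω ∈ D <;> by_cases h2 : ω ∈ {ω | ∀ A ∈ l, ω ∈ A} <;>
          simp [indicator01, h1, h2, Set.mem_inter_iff]
      rw [hmul, ES_indicator hB hD.1, ES_indicator hB hRdet, ES_indicator hB hIdet] at key
      have hsetscons : {ω : Config | ∀ A ∈ D :: l, ω ∈ A} = D ∩ {ω | ∀ A ∈ l, ω ∈ A} := by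
        ext ω; simp [List.forall_mem_cons, Set.mem_inter_iff]
      rw [List.map_cons, List.prod_cons, hsetscons]
      calc (μ D).toReal * (l.map (fun A => (μ A).toReal)).prod
          ≤ (μ D).toReal * (μ {ω | ∀ A ∈ l, ω ∈ A}).toReal :=
            mul_le_mul_of_nonneg_left (ih hrest) ENNReal.toReal_nonneg
        _ ≤ _ := key

lemma list_prod_ge (c : ℝ) (h0 : 0 ≤ c) :
    ∀ l : List ℝ, (∀ a ∈ l, c ≤ a) → c ^ l.length ≤ l.prod := by
  intro l
  induction l with
  | nil => intro _; simp
  | cons a l ih =>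
      intro h
      have ha := h a List.mem_cons_self
      have hrest := ih (fun b hb => h b (List.mem_cons_of_mem _ hb))
      simp only [List.length_cons, List.prod_cons, pow_succ]
      calc c ^ l.length * c ≤ l.prod * a := by
            exact mul_le_mul hrest ha h0 (le_trans (pow_nonneg h0 _) hrest)
        _ = a * l.prod := mul_comm _ _

lemma union_bound_fkg {μ : Measure Config} {p : ℝ} (hB : IsBernoulli μ p) (s : Finset Edge)
    (l : List (Set Config)) (hl : ∀ A ∈ l, DeterminedBy A s ∧ Incr A)
    (Long : Set Config) (hLdet : DeterminedBy Long s)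
    (hsub : ∀ ω, ω ∈ Long → ∃ A ∈ l, ω ∈ A)
    (x : ℝ) (hx0 : 0 ≤ x) (hx1 : x ≤ 1) (hxA : ∀ A ∈ l, (μ A).toReal ≤ x)
    (C : ℕ) (hC : l.length ≤ C) :
    (μ Long).toReal ≤ 1 - (1 - x) ^ C := by
  haveI := hB.1
  set lc : List (Set Config) := l.map (fun A => Aᶜ) with hlc
  have hlcp : ∀ B ∈ lc, DeterminedBy B s ∧ Decr B := by
    intro B hBmem
    obtain ⟨A, hA, rfl⟩ := List.mem_map.mp hBmem
    refine ⟨fun ω ω' hag => not_congr ((hl A hA).1 ω ω' hag), ?_⟩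
    intro ω ω' hle hmem hcon
    exact hmem ((hl A hA).2 ω ω' hle hcon)
  have hharris := harris_list hB s lc hlcp
  have hsub2 : {ω | ∀ B ∈ lc, ω ∈ B} ⊆ Longᶜ := by
    intro ω hω hLong
    obtain ⟨A, hA, hmem⟩ := hsub ω hLong
    exact hω Aᶜ (List.mem_map.mpr ⟨A, hA, rfl⟩) hmem
  have hmono : (μ {ω | ∀ B ∈ lc, ω ∈ B}).toReal ≤ (μ Longᶜ).toReal :=
    ENNReal.toReal_mono (measure_ne_top μ _) (measure_mono hsub2)
  have hcompl : (μ Longᶜ).toReal = 1 - (μ Long).toReal := by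
    rw [prob_compl_eq_one_sub (measurableSet_of_determined hLdet),
      ENNReal.toReal_sub_of_le prob_le_one ENNReal.one_ne_top]
    simp
  have hterms : ∀ a ∈ lc.map (fun B => (μ B).toReal), 1 - x ≤ a := by
    intro a ha
    obtain ⟨B, hBmem, rfl⟩ := List.mem_map.mp ha
    obtain ⟨A, hA, rfl⟩ := List.mem_map.mp hBmem
    have : (μ Aᶜ).toReal = 1 - (μ A).toReal := by
      rw [prob_compl_eq_one_sub (measurableSet_of_determined (hl A hA).1),
        ENNReal.toReal_sub_of_le prob_le_one ENNReal.one_ne_top]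
      simp
    rw [this]
    have := hxA A hA
    linarith
  have hlen : (lc.map (fun B => (μ B).toReal)).length ≤ C := by
    simp only [List.length_map, hlc]
    simpa using hC
  have hprodge : (1 - x) ^ C ≤ (lc.map (fun B => (μ B).toReal)).prod := by
    calc (1 - x) ^ C ≤ (1 - x) ^ (lc.map (fun B => (μ B).toReal)).length :=
          pow_le_pow_of_le_one (by linarith) (by linarith) hlen
      _ ≤ _ := list_prod_ge (1 - x) (by linarith) _ hterms
  linarith

-- PART 3

def CrossedRL (ω : Config) (a b c d : ℤ) : Prop :=
  ∃ x y : Vtx, x.1 = b ∧ y.1 = a ∧ ConnIn (box a b c d) ω x y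

lemma tip_eq (x : Vtx) (b : Bool) :
    tip (x, b) = (x.1 + (if b then 1 else -1), x.2 + 1) := by
  cases b <;> simp [tip, Prod.ext_iff]

lemma step_iff (ω : Config) (x y : Vtx) :
    Step ω x y ↔ ∃ b, ω (x, b) = true ∧ y = (x.1 + (if b then 1 else -1), x.2 + 1) := by
  unfold Step
  constructor
  · rintro ⟨b, h1, h2⟩; exact ⟨b, h1, by rw [h2, tip_eq]⟩
  · rintro ⟨b, h1, h2⟩; exact ⟨b, h1, by rw [h2, tip_eq]⟩

lemma connIn_congr {S : Set Vtx} {ω ω' : Config}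
    (h : ∀ v ∈ S, ∀ b, ω (v, b) = ω' (v, b)) {x y : Vtx} (hc : ConnIn S ω x y) :
    ConnIn S ω' x y := by
  obtain ⟨L, f, hf0, hfL, hmem, hstep⟩ := connIn_exists_fn hc
  have := connIn_of_fn (S := S) (ω := ω') f 0 L (Nat.zero_le L)
    (fun i _ hi => hmem i hi)
    (fun i _ hi => by
      obtain ⟨b, hb, htip⟩ := hstep i hi
      exact ⟨b, (h (f i) (hmem i hi.le) b) ▸ hb, htip⟩)
  rwa [hf0, hfL] at this

lemma connIn_mono {S : Set Vtx} {ω ω' : Config}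
    (h : ∀ e, ω e = true → ω' e = true) {x y : Vtx} (hc : ConnIn S ω x y) :
    ConnIn S ω' x y := by
  refine ⟨hc.1, ?_⟩
  exact Relation.ReflTransGen.mono (p := fun a b => Step ω' a b ∧ b ∈ S) (fun a b hab => ⟨⟨hab.1.choose, h _ hab.1.choose_spec.1,
    hab.1.choose_spec.2⟩, hab.2⟩) _ _ hc.2

noncomputable def boxEdges (a b c d : ℤ) : Finset Edge :=
  ((Finset.Icc a b ×ˢ Finset.Icc c d) ×ˢ (Finset.univ : Finset Bool))

lemma mem_boxEdges {a b c d : ℤ} {v : Vtx} (hv : v ∈ box a b c d) (bit : Bool) :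
    (v, bit) ∈ boxEdges a b c d := by
  obtain ⟨h1, h2, h3, h4, -⟩ := hv
  simp [boxEdges, Finset.mem_Icc, h1, h2, h3, h4]

lemma determined_cross (P Q : Vtx → Prop) (a b c d : ℤ) :
    DeterminedBy {ω | ∃ x y : Vtx, P x ∧ Q y ∧ ConnIn (box a b c d) ω x y}
      (boxEdges a b c d) := by
  intro ω ω' hag
  constructor
  · rintro ⟨x, y, hP, hQ, hc⟩
    exact ⟨x, y, hP, hQ, connIn_congr (fun v hv b => hag (v, b) (mem_boxEdges hv b)) hc⟩
  · rintro ⟨x, y, hP, hQ, hc⟩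
    exact ⟨x, y, hP, hQ, connIn_congr (fun v hv b => (hag (v, b) (mem_boxEdges hv b)).symm) hc⟩

lemma incr_cross (P Q : Vtx → Prop) (a b c d : ℤ) :
    Incr {ω | ∃ x y : Vtx, P x ∧ Q y ∧ ConnIn (box a b c d) ω x y} := by
  rintro ω ω' h ⟨x, y, hP, hQ, hc⟩
  exact ⟨x, y, hP, hQ, connIn_mono h hc⟩

lemma crossedVert_eq (a b c d : ℤ) :
    {ω : Config | CrossedVert ω a b c d}
      = {ω | ∃ x y : Vtx, x.2 = c ∧ y.2 = d ∧ ConnIn (box a b c d) ω x y} := rfl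

-- translation
def trEdge (t u : ℤ) : Edge ≃ Edge where
  toFun e := ((e.1.1 + t, e.1.2 + u), e.2)
  invFun e := ((e.1.1 - t, e.1.2 - u), e.2)
  left_inv := fun ⟨⟨a, b⟩, c⟩ => by simp
  right_inv := fun ⟨⟨a, b⟩, c⟩ => by simp

lemma step_shift (ω : Config) (t u : ℤ) (x y : Vtx) :
    Step (fun e => ω (trEdge t u e)) x y ↔ Step ω (x.1 + t, x.2 + u) (y.1 + t, y.2 + u) := by
  rw [step_iff, step_iff]
  constructor
  · rintro ⟨b, h1, h2⟩
    refine ⟨b, h1, ?_⟩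
    rw [Prod.ext_iff] at h2 ⊢
    obtain ⟨ha, hb⟩ := h2
    constructor <;> simp only at ha hb ⊢ <;> omega
  · rintro ⟨b, h1, h2⟩
    refine ⟨b, h1, ?_⟩
    rw [Prod.ext_iff] at h2 ⊢
    obtain ⟨ha, hb⟩ := h2
    constructor <;> simp only at ha hb ⊢ <;> omega

lemma box_shift {t u : ℤ} (hEven : Even (t + u)) (a b c d : ℤ) (v : Vtx) :
    v ∈ box a b c d ↔ ((v.1 + t, v.2 + u) : Vtx) ∈ box (a+t) (b+t) (c+u) (d+u) := by
  simp only [box, Set.mem_setOf_eq, Int.even_iff] at *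
  omega

lemma connIn_shift {t u : ℤ} (hEven : Even (t + u)) (a b c d : ℤ) (ω : Config) (x y : Vtx) :
    ConnIn (box a b c d) (fun e => ω (trEdge t u e)) x y
      ↔ ConnIn (box (a+t) (b+t) (c+u) (d+u)) ω (x.1 + t, x.2 + u) (y.1 + t, y.2 + u) := by
  constructor
  · rintro ⟨hx, hr⟩
    refine ⟨(box_shift hEven a b c d x).mp hx, ?_⟩
    exact Relation.ReflTransGen.lift
      (p := fun v w : Vtx => Step ω v w ∧ w ∈ box (a+t) (b+t) (c+u) (d+u))
      (fun v : Vtx => ((v.1 + t, v.2 + u) : Vtx))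
      (fun v w hw => ⟨(step_shift ω t u v w).mp hw.1, (box_shift hEven a b c d w).mp hw.2⟩) _ _ hr
  · rintro ⟨hx, hr⟩
    refine ⟨(box_shift hEven a b c d x).mpr hx, ?_⟩
    have key := Relation.ReflTransGen.lift
      (p := fun v w : Vtx => Step (fun e => ω (trEdge t u e)) v w ∧ w ∈ box a b c d)
      (fun v : Vtx => ((v.1 - t, v.2 - u) : Vtx))
      (fun v w hw => ?_) _ _ hr
    · simpa [Function.onFun] using key
    · constructor
      · have := (step_shift ω t u (v.1 - t, v.2 - u) (w.1 - t, w.2 - u)).mpr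
        simp only [sub_add_cancel] at this
        exact this hw.1
      · have := (box_shift hEven a b c d (w.1 - t, w.2 - u)).mpr
        simp only [sub_add_cancel] at this
        exact this hw.2



lemma crossedVert_shift {t u : ℤ} (hEven : Even (t+u)) (ω : Config) (a b c d : ℤ) :
    CrossedVert (fun e => ω (trEdge t u e)) a b c d
      ↔ CrossedVert ω (a+t) (b+t) (c+u) (d+u) := by
  constructor
  · rintro ⟨x, y, hx, hy, hc⟩
    exact ⟨(x.1+t, x.2+u), (y.1+t, y.2+u), by simp [hx], by simp [hy],
      (connIn_shift hEven a b c d ω x y).mp hc⟩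
  · rintro ⟨x, y, hx, hy, hc⟩
    have h' := (connIn_shift hEven a b c d ω (x.1 - t, x.2 - u) (y.1 - t, y.2 - u)).mpr
    simp only [sub_add_cancel] at h'
    exact ⟨(x.1 - t, x.2 - u), (y.1 - t, y.2 - u), by simp [hx], by simp [hy], h' hc⟩

lemma crossedLR_shift {t u : ℤ} (hEven : Even (t+u)) (ω : Config) (a b c d : ℤ) :
    CrossedLR (fun e => ω (trEdge t u e)) a b c d
      ↔ CrossedLR ω (a+t) (b+t) (c+u) (d+u) := by
  constructor
  · rintro ⟨x, y, hx, hy, hc⟩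
    exact ⟨(x.1+t, x.2+u), (y.1+t, y.2+u), by simp [hx], by simp [hy],
      (connIn_shift hEven a b c d ω x y).mp hc⟩
  · rintro ⟨x, y, hx, hy, hc⟩
    have h' := (connIn_shift hEven a b c d ω (x.1 - t, x.2 - u) (y.1 - t, y.2 - u)).mpr
    simp only [sub_add_cancel] at h'
    exact ⟨(x.1 - t, x.2 - u), (y.1 - t, y.2 - u), by simp [hx], by simp [hy], h' hc⟩

lemma measure_crossedVert_shift {μ : Measure Config} {p : ℝ} (hB : IsBernoulli μ p)
    {t u : ℤ} (hEven : Even (t + u)) (a b c d : ℤ) :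
    (μ {ω | CrossedVert ω (a+t) (b+t) (c+u) (d+u)}).toReal
      = (μ {ω | CrossedVert ω a b c d}).toReal := by
  have hset : {ω : Config | CrossedVert ω (a+t) (b+t) (c+u) (d+u)}
      = {ω | (fun e => ω (trEdge t u e)) ∈ {ω' | CrossedVert ω' a b c d}} := by
    ext ω; exact (crossedVert_shift hEven ω a b c d).symm
  rw [hset]
  exact measure_precomp hB (trEdge t u)
    (determined_cross (fun x => x.2 = c) (fun y => y.2 = d) a b c d)

lemma measure_crossedLR_shift {μ : Measure Config} {p : ℝ} (hB : IsBernoulli μ p)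
    {t u : ℤ} (hEven : Even (t + u)) (a b c d : ℤ) :
    (μ {ω | CrossedLR ω (a+t) (b+t) (c+u) (d+u)}).toReal
      = (μ {ω | CrossedLR ω a b c d}).toReal := by
  have hset : {ω : Config | CrossedLR ω (a+t) (b+t) (c+u) (d+u)}
      = {ω | (fun e => ω (trEdge t u e)) ∈ {ω' | CrossedLR ω' a b c d}} := by
    ext ω; exact (crossedLR_shift hEven ω a b c d).symm
  rw [hset]
  exact measure_precomp hB (trEdge t u)
    (determined_cross (fun x => x.1 = a) (fun y => y.1 = b) a b c d)

-- reflection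
def refEdge : Edge ≃ Edge where
  toFun e := ((-e.1.1, e.1.2), !e.2)
  invFun e := ((-e.1.1, e.1.2), !e.2)
  left_inv := fun ⟨⟨a, b⟩, c⟩ => by simp
  right_inv := fun ⟨⟨a, b⟩, c⟩ => by simp

lemma step_reflect (ω : Config) (x y : Vtx) :
    Step (fun e => ω (refEdge e)) x y ↔ Step ω (-x.1, x.2) (-y.1, y.2) := by
  rw [step_iff, step_iff]
  constructor
  · rintro ⟨b, h1, h2⟩
    refine ⟨!b, ?_, ?_⟩
    · exact h1
    · subst h2
      cases b <;> simp [Prod.ext_iff] <;> ring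
  · rintro ⟨b, h1, h2⟩
    refine ⟨!b, ?_, ?_⟩
    · simpa [refEdge] using h1
    · rw [Prod.ext_iff] at h2 ⊢
      cases b <;> simp at h2 ⊢ <;> omega

lemma box_reflect (a b c d : ℤ) (v : Vtx) :
    v ∈ box a b c d ↔ ((-v.1, v.2) : Vtx) ∈ box (-b) (-a) c d := by
  simp only [box, Set.mem_setOf_eq, Int.even_iff] at *
  omega

lemma connIn_reflect (a b c d : ℤ) (ω : Config) (x y : Vtx) :
    ConnIn (box a b c d) (fun e => ω (refEdge e)) x y
      ↔ ConnIn (box (-b) (-a) c d) ω (-x.1, x.2) (-y.1, y.2) := by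
  constructor
  · rintro ⟨hx, hr⟩
    refine ⟨(box_reflect a b c d x).mp hx, ?_⟩
    exact Relation.ReflTransGen.lift
      (p := fun v w : Vtx => Step ω v w ∧ w ∈ box (-b) (-a) c d)
      (fun v : Vtx => ((-v.1, v.2) : Vtx))
      (fun v w hw => ⟨(step_reflect ω v w).mp hw.1, (box_reflect a b c d w).mp hw.2⟩) _ _ hr
  · rintro ⟨hx, hr⟩
    refine ⟨(box_reflect a b c d x).mpr hx, ?_⟩
    have key := Relation.ReflTransGen.lift
      (p := fun v w : Vtx => Step (fun e => ω (refEdge e)) v w ∧ w ∈ box a b c d)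
      (fun v : Vtx => ((-v.1, v.2) : Vtx))
      (fun v w hw => ?_) _ _ hr
    · simpa [Function.onFun] using key
    · constructor
      · have := (step_reflect ω (-v.1, v.2) (-w.1, w.2)).mpr
        simp only [neg_neg] at this
        exact this hw.1
      · have := (box_reflect (-b) (-a) c d w).mp hw.2
        simpa only [neg_neg] using this

lemma crossedLR_reflect (ω : Config) (a b c d : ℤ) :
    CrossedLR (fun e => ω (refEdge e)) a b c d ↔ CrossedRL ω (-b) (-a) c d := by
  constructor
  · rintro ⟨x, y, hx, hy, hc⟩
    exact ⟨(-x.1, x.2), (-y.1, y.2), by simp [hx], by simp [hy],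
      (connIn_reflect a b c d ω x y).mp hc⟩
  · rintro ⟨x, y, hx, hy, hc⟩
    have h' := (connIn_reflect a b c d ω (-x.1, x.2) (-y.1, y.2)).mpr
    simp only [neg_neg] at h'
    exact ⟨(-x.1, x.2), (-y.1, y.2), by simp [hx], by simp [hy], h' hc⟩

lemma measure_crossedRL' {μ : Measure Config} {p : ℝ} (hB : IsBernoulli μ p) (a b c d : ℤ) :
    (μ {ω | CrossedRL ω a b c d}).toReal = (μ {ω | CrossedLR ω (-b) (-a) c d}).toReal := by
  have hset : {ω : Config | CrossedRL ω a b c d}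
      = {ω | (fun e => ω (refEdge e)) ∈ {ω' | CrossedLR ω' (-b) (-a) c d}} := by
    ext ω
    have := crossedLR_reflect ω (-b) (-a) c d
    simp only [neg_neg] at this
    exact this.symm
  rw [hset]
  exact measure_precomp hB refEdge
    (determined_cross (fun x => x.1 = -b) (fun y => y.1 = -a) (-b) (-a) c d)

lemma measure_vert_box {μ : Measure Config} {p : ℝ} (hB : IsBernoulli μ p)
    (w n' : ℕ) (t u : ℤ) (hEven : Even (t + u)) :
    (μ {ω | CrossedVert ω t (t + w) u (u + n')}).toReal = V μ w n' := by
  have h := measure_crossedVert_shift hB hEven 0 w 0 n'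
  simp only [zero_add] at h
  rw [show (t + (w:ℤ)) = (w:ℤ) + t from add_comm _ _,
    show (u + (n':ℤ)) = (n':ℤ) + u from add_comm _ _, h]
  rfl

lemma measure_lr_box {μ : Measure Config} {p : ℝ} (hB : IsBernoulli μ p)
    (m' h' : ℕ) (t u : ℤ) (hEven : Even (t + u)) :
    (μ {ω | CrossedLR ω t (t + m') u (u + h')}).toReal = H μ m' h' := by
  have h := measure_crossedLR_shift hB hEven 0 m' 0 h'
  simp only [zero_add] at h
  rw [show (t + (m':ℤ)) = (m':ℤ) + t from add_comm _ _,
    show (u + (h':ℤ)) = (h':ℤ) + u from add_comm _ _, h]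
  rfl

lemma measure_rl_box {μ : Measure Config} {p : ℝ} (hB : IsBernoulli μ p)
    (m' h' : ℕ) (t u : ℤ) (hEven : Even (t + m' + u)) :
    (μ {ω | CrossedRL ω t (t + m') u (u + h')}).toReal = H μ m' h' := by
  rw [measure_crossedRL' hB t (t + m') u (u + h')]
  have hEven' : Even (-(t + (m':ℤ)) + u) := by
    rw [Int.even_iff] at hEven ⊢
    omega
  have h2 := measure_lr_box hB m' h' (-(t + m')) u hEven'
  rw [show (-(t + (m':ℤ)) + m') = -t by ring] at h2
  exact h2

lemma path_snd {ω : Config} (f : ℕ → Vtx) (L : ℕ)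
    (hstep : ∀ i, i < L → Step ω (f i) (f (i+1))) :
    ∀ i, i ≤ L → (f i).2 = (f 0).2 + i := by
  intro i
  induction i with
  | zero => intro _; simp
  | succ i ih =>
      intro hi
      have h1 := (step_coords (hstep i (by omega))).1
      have h2 := ih (by omega)
      push_cast
      omega

lemma vert_decomp (ω : Config) (m n W w hh s Jm : ℕ)
    (hs2 : 2 ≤ s)
    (hwm : (m:ℤ) + 2*s - 3 ≤ (w:ℤ))
    (hhn : (n:ℤ) + 1 ≤ (hh:ℤ))
    (hWJ : (W:ℤ) < (s:ℤ) * (Jm + 1))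
    (hcross : CrossedVert ω 0 (W:ℤ) 0 (n:ℤ)) :
    (∃ j : ℕ, j ≤ Jm ∧ CrossedVert ω ((s*j : ℕ) : ℤ) (((s*j : ℕ) : ℤ) + (w:ℤ)) 0 (n:ℤ)) ∨
    (∃ k : ℕ, k ≤ Jm + 1 ∧ CrossedLR ω ((s*k : ℕ) : ℤ) (((s*k : ℕ) : ℤ) + (m:ℤ)) 0 (hh:ℤ)) ∨
    (∃ k : ℕ, k ≤ Jm + 1 ∧ CrossedRL ω ((s*k : ℕ) : ℤ) (((s*k : ℕ) : ℤ) + (m:ℤ))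
        (if Even m then 0 else -1) ((if Even m then 0 else -1) + (hh:ℤ))) := by
  obtain ⟨x, y, hx2, hy2, hc⟩ := hcross
  obtain ⟨L, f, hf0, hfL, hmem, hstep⟩ := connIn_exists_fn hc
  have hsnd0 : (f 0).2 = 0 := by rw [hf0]; exact hx2
  have hsnd : ∀ i, i ≤ L → (f i).2 = (i:ℤ) := by
    intro i hi
    have := path_snd f L hstep i hi
    omega
  have hLn : L = n := by
    have h1 := hsnd L le_rfl
    rw [hfL, hy2] at h1
    exact_mod_cast h1.symm
  subst hLn
  have hgstep : ∀ i, 0 ≤ i → i < L → (f (i+1)).1 = (f i).1 + 1 ∨ (f (i+1)).1 = (f i).1 - 1 :=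
    fun i _ hi => (step_coords (hstep i hi)).2
  have hbox : ∀ i, i ≤ L → 0 ≤ (f i).1 ∧ (f i).1 ≤ (W:ℤ) := by
    intro i hi
    obtain ⟨h1, h2, -, -, -⟩ := hmem i hi
    exact ⟨h1, h2⟩
  have hpar : ∀ i, i ≤ L → Even ((f i).1 + (f i).2) := fun i hi => (hmem i hi).2.2.2.2
  set g : ℕ → ℤ := fun i => (f i).1 with hg
  have hT : ∃ S : Finset ℤ, S = (Finset.range (L+1)).image g := ⟨_, rfl⟩
  obtain ⟨T, hTdef⟩ := hT
  have hTne : T.Nonempty := ⟨g 0, by rw [hTdef]; exact Finset.mem_image.mpr ⟨0, by simp, rfl⟩⟩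
  set xmin := T.min' hTne with hxmin
  set xmax := T.max' hTne with hxmax
  have hmin_le : ∀ i, i ≤ L → xmin ≤ g i := by
    intro i hi
    exact T.min'_le _ (by rw [hTdef]; exact Finset.mem_image.mpr ⟨i, by simp; omega, rfl⟩)
  have hle_max : ∀ i, i ≤ L → g i ≤ xmax := by
    intro i hi
    exact T.le_max' _ (by rw [hTdef]; exact Finset.mem_image.mpr ⟨i, by simp; omega, rfl⟩)
  have hattain_min : ∃ i, i ≤ L ∧ g i = xmin := by
    have hmm : xmin ∈ T := T.min'_mem hTne
    rw [hTdef] at hmm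
    obtain ⟨i, hi, hgi⟩ := Finset.mem_image.mp hmm
    exact ⟨i, by simp at hi; omega, hgi⟩
  have hattain_max : ∃ i, i ≤ L ∧ g i = xmax := by
    have hmm : xmax ∈ T := T.max'_mem hTne
    rw [hTdef] at hmm
    obtain ⟨i, hi, hgi⟩ := Finset.mem_image.mp hmm
    exact ⟨i, by simp at hi; omega, hgi⟩
  obtain ⟨imin, himin, hgmin⟩ := hattain_min
  obtain ⟨imax, himax, hgmax⟩ := hattain_max
  have h0min : 0 ≤ xmin := by rw [← hgmin]; exact (hbox imin himin).1
  have hmaxW : xmax ≤ (W:ℤ) := by rw [← hgmax]; exact (hbox imax himax).2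
  have hminmax : xmin ≤ xmax := by rw [← hgmax]; exact hmin_le imax himax
  have hs0 : (0:ℤ) < (s:ℤ) := by exact_mod_cast (by omega : 0 < s)
  by_cases hcase : xmax - xmin ≤ (w:ℤ) - s + 1
  · -- narrow: vertical crossing of a translate
    have hdm := Int.mul_ediv_add_emod xmin (s:ℤ)
    have hr0 : 0 ≤ xmin % (s:ℤ) := Int.emod_nonneg xmin (by omega)
    have hrs : xmin % (s:ℤ) < (s:ℤ) := Int.emod_lt_of_pos xmin hs0
    have hq0 : 0 ≤ xmin / (s:ℤ) := Int.ediv_nonneg h0min (le_of_lt hs0)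
    set j := (xmin / (s:ℤ)).toNat with hj
    have hjq : (j:ℤ) = xmin / (s:ℤ) := Int.toNat_of_nonneg hq0
    have hsj : ((s*j : ℕ):ℤ) = xmin - xmin % (s:ℤ) := by
      push_cast
      rw [hjq]
      linarith
    have hjJm : j ≤ Jm := by
      have h1 : (s:ℤ) * (xmin / (s:ℤ)) ≤ (W:ℤ) := by linarith
      have h2 : (s:ℤ) * (xmin / (s:ℤ)) < (s:ℤ) * ((Jm:ℤ)+1) := lt_of_le_of_lt h1 hWJ
      have h3 : xmin / (s:ℤ) < (Jm:ℤ)+1 := lt_of_mul_lt_mul_left h2 (le_of_lt hs0)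
      omega
    refine Or.inl ⟨j, hjJm, x, y, hx2, hy2, ?_⟩
    have hconn := connIn_of_fn (S := box ((s*j : ℕ) : ℤ) (((s*j : ℕ) : ℤ) + (w:ℤ)) 0 (L:ℤ))
      (ω := ω) f 0 L (Nat.zero_le L) ?_ (fun i _ hi => hstep i hi)
    · rwa [hf0, hfL] at hconn
    · intro i _ hi
      have h1 := hmin_le i hi
      have h2 := hle_max i hi
      have hsndi := hsnd i hi
      have hgi : g i = (f i).1 := rfl
      refine ⟨by omega, by omega, by omega, by omega, hpar i hi⟩
  · -- wide: horizontal crossing of a window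
    push_neg at hcase
    have hrange : xmin + (m:ℤ) + s - 1 ≤ xmax := by omega
    have hdm := Int.mul_ediv_add_emod (xmin + s - 1) (s:ℤ)
    have hr0 : 0 ≤ (xmin + s - 1) % (s:ℤ) := Int.emod_nonneg _ (by omega)
    have hrs : (xmin + s - 1) % (s:ℤ) < (s:ℤ) := Int.emod_lt_of_pos _ hs0
    have hq0 : 0 ≤ (xmin + s - 1) / (s:ℤ) := Int.ediv_nonneg (by omega) (le_of_lt hs0)
    set k := ((xmin + s - 1) / (s:ℤ)).toNat with hk
    have hkq : (k:ℤ) = (xmin + s - 1) / (s:ℤ) := Int.toNat_of_nonneg hq0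
    have hsk : ((s*k : ℕ):ℤ) = xmin + s - 1 - (xmin + s - 1) % (s:ℤ) := by
      push_cast
      rw [hkq]
      linarith
    set bz := ((s*k : ℕ):ℤ) with hbz
    have hb1 : xmin ≤ bz := by omega
    have hb2 : bz ≤ xmin + s - 1 := by omega
    have hkJm : k ≤ Jm + 1 := by
      have hexp : (s:ℤ) * ((Jm:ℤ)+2) = (s:ℤ) * ((Jm:ℤ)+1) + s := by ring
      have h1 : (s:ℤ) * ((xmin + s - 1) / (s:ℤ)) < (s:ℤ) * ((Jm:ℤ)+2) := by
        have : (s:ℤ) * ((xmin + s - 1) / (s:ℤ)) ≤ (W:ℤ) + s - 1 := by linarith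
        omega
      have h3 := lt_of_mul_lt_mul_left h1 (le_of_lt hs0)
      omega
    have hbm_le : bz + (m:ℤ) ≤ xmax := by omega
    have hxmin_le : xmin ≤ bz + (m:ℤ) := by omega
    rcases le_total imin imax with hord | hord
    · -- left-to-right
      obtain ⟨t1, ht1a, ht1b, hgt1⟩ := walk_ivt g imin bz imax hord
        (fun i a b => hgstep i (by omega) (by omega)) (by omega) (by omega)
      obtain ⟨t2, ht2a, ht2b, hgt2⟩ := walk_ivt g t1 (bz + m) imax ht1b
        (fun i a b => hgstep i (by omega) (by omega)) (by omega) (by omega)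
      obtain ⟨u, v, hu1, huv, hv2, hgu, hgv, hcorr⟩ := walk_corridor g t1 t2 ht2a
        (fun i a b => hgstep i (by omega) (by omega)) bz (bz + m) hgt1 hgt2 (by omega)
      refine Or.inr (Or.inl ⟨k, hkJm, f u, f v, hgu, hgv, ?_⟩)
      have hvL : v ≤ L := by omega
      have hconn := connIn_of_fn (S := box bz (bz + (m:ℤ)) 0 (hh:ℤ)) (ω := ω) f u v huv
        ?_ (fun i hiu hiv => hstep i (by omega))
      · exact hconn
      · intro i hiu hiv
        have hiL : i ≤ L := by omega
        have hcorri := hcorr i hiu hiv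
        have hsndi := hsnd i hiL
        have hgi : g i = (f i).1 := rfl
        exact ⟨by omega, by omega, by omega, by omega, hpar i hiL⟩
    · -- right-to-left
      obtain ⟨t1, ht1a, ht1b, hgt1⟩ := walk_ivt' g imax imin (bz + m) hord
        (fun i a b => hgstep i (by omega) (by omega)) (by omega) (by omega)
      obtain ⟨t2, ht2a, ht2b, hgt2⟩ := walk_ivt' g t1 imin bz ht1b
        (fun i a b => hgstep i (by omega) (by omega)) (by omega) (by omega)
      obtain ⟨u, v, hu1, huv, hv2, hgu, hgv, hcorr⟩ := walk_corridor' g t1 t2 ht2a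
        (fun i a b => hgstep i (by omega) (by omega)) bz (bz + m) hgt1 hgt2 (by omega)
      refine Or.inr (Or.inr ⟨k, hkJm, f u, f v, hgu, hgv, ?_⟩)
      have hvL : v ≤ L := by omega
      have hBle : (if Even m then (0:ℤ) else -1) ≤ 0 := by split <;> omega
      have hBge : (L:ℤ) ≤ (if Even m then (0:ℤ) else -1) + (hh:ℤ) := by split <;> omega
      have hconn := connIn_of_fn
        (S := box bz (bz + (m:ℤ)) (if Even m then (0:ℤ) else -1)
          ((if Even m then (0:ℤ) else -1) + (hh:ℤ))) (ω := ω) f u v huv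
        ?_ (fun i hiu hiv => hstep i (by omega))
      · exact hconn
      · intro i hiu hiv
        have hiL : i ≤ L := by omega
        have hcorri := hcorr i hiu hiv
        have hsndi := hsnd i hiL
        have hgi : g i = (f i).1 := rfl
        exact ⟨by omega, by omega, by omega, by omega, hpar i hiL⟩

lemma horiz_decomp (ω : Config) (m n Hh w hh s Jm : ℕ)
    (hs2 : 2 ≤ s)
    (hmw : (m:ℤ) ≤ (w:ℤ))
    (hhn : (n:ℤ) + 2*s - 3 ≤ (hh:ℤ))
    (hWJ : (Hh:ℤ) < (s:ℤ) * (Jm + 1))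
    (hcross : CrossedLR ω 0 (m:ℤ) 0 (Hh:ℤ)) :
    (∃ j : ℕ, j ≤ Jm ∧ CrossedLR ω 0 (m:ℤ) ((s*j : ℕ) : ℤ) (((s*j : ℕ) : ℤ) + (hh:ℤ))) ∨
    (∃ k : ℕ, k ≤ Jm + 1 ∧ CrossedVert ω 0 (w:ℤ) ((s*k : ℕ) : ℤ) (((s*k : ℕ) : ℤ) + (n:ℤ))) := by
  obtain ⟨x, y, hx1, hy1, hc⟩ := hcross
  obtain ⟨L, f, hf0, hfL, hmem, hstep⟩ := connIn_exists_fn hc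
  have hsnd : ∀ i, i ≤ L → (f i).2 = (f 0).2 + i := path_snd f L hstep
  have hbox : ∀ i, i ≤ L → 0 ≤ (f i).1 ∧ (f i).1 ≤ (m:ℤ) ∧ 0 ≤ (f i).2 ∧ (f i).2 ≤ (Hh:ℤ) := by
    intro i hi
    obtain ⟨h1, h2, h3, h4, -⟩ := hmem i hi
    exact ⟨h1, h2, h3, h4⟩
  have hpar : ∀ i, i ≤ L → Even ((f i).1 + (f i).2) := fun i hi => (hmem i hi).2.2.2.2
  have hy00 : 0 ≤ (f 0).2 := (hbox 0 (Nat.zero_le L)).2.2.1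
  have hyL : (f 0).2 + L ≤ (Hh:ℤ) := by
    have h1 := hsnd L le_rfl
    have h2 := (hbox L le_rfl).2.2.2
    omega
  have hs0 : (0:ℤ) < (s:ℤ) := by exact_mod_cast (by omega : 0 < s)
  by_cases hcase : (L:ℤ) ≤ (hh:ℤ) - s + 1
  · -- short: LR crossing of a vertical translate
    have hdm := Int.mul_ediv_add_emod (f 0).2 (s:ℤ)
    have hr0 : 0 ≤ (f 0).2 % (s:ℤ) := Int.emod_nonneg _ (by omega)
    have hrs : (f 0).2 % (s:ℤ) < (s:ℤ) := Int.emod_lt_of_pos _ hs0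
    have hq0 : 0 ≤ (f 0).2 / (s:ℤ) := Int.ediv_nonneg hy00 (le_of_lt hs0)
    set j := ((f 0).2 / (s:ℤ)).toNat with hj
    have hjq : (j:ℤ) = (f 0).2 / (s:ℤ) := Int.toNat_of_nonneg hq0
    have hsj : ((s*j : ℕ):ℤ) = (f 0).2 - (f 0).2 % (s:ℤ) := by
      push_cast
      rw [hjq]
      linarith
    have hjJm : j ≤ Jm := by
      have h1 : (s:ℤ) * ((f 0).2 / (s:ℤ)) < (s:ℤ) * ((Jm:ℤ)+1) := by
        have : (s:ℤ) * ((f 0).2 / (s:ℤ)) ≤ (Hh:ℤ) := by linarith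
        linarith
      have h3 := lt_of_mul_lt_mul_left h1 (le_of_lt hs0)
      omega
    refine Or.inl ⟨j, hjJm, x, y, hx1, hy1, ?_⟩
    have hconn := connIn_of_fn
      (S := box 0 (m:ℤ) ((s*j : ℕ) : ℤ) (((s*j : ℕ) : ℤ) + (hh:ℤ))) (ω := ω) f 0 L
      (Nat.zero_le L) ?_ (fun i _ hi => hstep i hi)
    · rwa [hf0, hfL] at hconn
    · intro i _ hi
      obtain ⟨h1, h2, h3, h4⟩ := hbox i hi
      have hsndi := hsnd i hi
      exact ⟨h1, h2, by omega, by omega, hpar i hi⟩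
  · -- long: vertical crossing of a sub-box
    push_neg at hcase
    have hdm := Int.mul_ediv_add_emod ((f 0).2 + s - 1) (s:ℤ)
    have hr0 : 0 ≤ ((f 0).2 + s - 1) % (s:ℤ) := Int.emod_nonneg _ (by omega)
    have hrs : ((f 0).2 + s - 1) % (s:ℤ) < (s:ℤ) := Int.emod_lt_of_pos _ hs0
    have hq0 : 0 ≤ ((f 0).2 + s - 1) / (s:ℤ) := Int.ediv_nonneg (by omega) (le_of_lt hs0)
    set k := (((f 0).2 + s - 1) / (s:ℤ)).toNat with hk
    have hkq : (k:ℤ) = ((f 0).2 + s - 1) / (s:ℤ) := Int.toNat_of_nonneg hq0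
    have hsk : ((s*k : ℕ):ℤ) = (f 0).2 + s - 1 - ((f 0).2 + s - 1) % (s:ℤ) := by
      push_cast
      rw [hkq]
      linarith
    have hkJm : k ≤ Jm + 1 := by
      have hexp : (s:ℤ) * ((Jm:ℤ)+2) = (s:ℤ) * ((Jm:ℤ)+1) + s := by ring
      have h1 : (s:ℤ) * (((f 0).2 + s - 1) / (s:ℤ)) < (s:ℤ) * ((Jm:ℤ)+2) := by
        have : (s:ℤ) * (((f 0).2 + s - 1) / (s:ℤ)) ≤ (Hh:ℤ) + s - 1 := by linarith
        omega
      have h3 := lt_of_mul_lt_mul_left h1 (le_of_lt hs0)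
      omega
    have hc1 : (f 0).2 ≤ ((s*k : ℕ):ℤ) := by omega
    have hc2 : ((s*k : ℕ):ℤ) ≤ (f 0).2 + s - 1 := by omega
    set u := (((s*k : ℕ):ℤ) - (f 0).2).toNat with hu
    have huq : (u:ℤ) = ((s*k : ℕ):ℤ) - (f 0).2 := Int.toNat_of_nonneg (by omega)
    have hvL : u + n ≤ L := by
      have : (u:ℤ) + n ≤ (L:ℤ) := by omega
      exact_mod_cast this
    have hfu : (f u).2 = ((s*k : ℕ):ℤ) := by
      have := hsnd u (by omega)
      omega
    have hfv : (f (u + n)).2 = ((s*k : ℕ):ℤ) + (n:ℤ) := by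
      have := hsnd (u + n) (by omega)
      push_cast at this
      omega
    refine Or.inr ⟨k, hkJm, f u, f (u + n), hfu, hfv, ?_⟩
    exact connIn_of_fn (S := box 0 (w:ℤ) ((s*k : ℕ) : ℤ) (((s*k : ℕ) : ℤ) + (n:ℤ)))
      (ω := ω) f u (u + n) (by omega)
      (fun i hiu hiv => by
        obtain ⟨h1, h2, h3, h4⟩ := hbox i (by omega)
        have hsndi := hsnd i (by omega)
        exact ⟨h1, by omega, by omega, by omega, hpar i (by omega)⟩)
      (fun i hiu hiv => hstep i (by omega))

def spacing (q k : ℕ) : ℕ := if k < 4*q then 2 else 2*(k/(2*q))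

set_option maxHeartbeats 2000000 in
lemma key_arith (δ Δ : ℝ) (hδ : 1 < δ) (hΔ : δ < Δ) (q Jm : ℕ)
    (hq : q = ⌈(4:ℝ)/(δ-1)⌉₊ + 1) (hJ : Jm = 2*q*(⌈Δ⌉₊+2)) (k : ℕ) (hk : 1 ≤ k) :
    2 ≤ spacing q k ∧ 2 ∣ spacing q k ∧
      ((k:ℤ) + 2*(spacing q k) - 3 ≤ ((⌈δ*k⌉₊:ℕ):ℤ)) ∧
      (((⌈Δ*k⌉₊:ℕ):ℤ) < ((spacing q k):ℤ) * ((Jm:ℤ)+1)) := by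
  have hδ0 : (0:ℝ) < δ - 1 := by linarith
  have hΔ0 : (0:ℝ) < Δ := by linarith
  have hq1 : 1 ≤ q := by omega
  have hqR : (4:ℝ)/(δ-1) ≤ (q:ℝ) := by
    have h1 : (4:ℝ)/(δ-1) ≤ (⌈(4:ℝ)/(δ-1)⌉₊ : ℝ) := Nat.le_ceil _
    have h2 : ((⌈(4:ℝ)/(δ-1)⌉₊ : ℕ):ℝ) ≤ (q:ℝ) := by
      rw [hq]; push_cast; linarith
    linarith
  have hq4 : (4:ℝ) ≤ (δ-1) * q := by
    rw [div_le_iff₀ hδ0] at hqR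
    linarith
  have hM1 : (1:ℝ) ≤ (k:ℝ) := by exact_mod_cast hk
  have hQ1 : (1:ℝ) ≤ (q:ℝ) := by exact_mod_cast hq1
  have hδk_le : δ*(k:ℝ) ≤ ((⌈δ*k⌉₊:ℕ):ℝ) := Nat.le_ceil _
  have hΔk_lt : ((⌈Δ*k⌉₊:ℕ):ℝ) < Δ*(k:ℝ) + 1 :=
    Nat.ceil_lt_add_one (by positivity)
  have hceilΔ : Δ ≤ ((⌈Δ⌉₊:ℕ):ℝ) := Nat.le_ceil _
  have hJmR : ((Jm:ℕ):ℝ) = 2*(q:ℝ)*(((⌈Δ⌉₊:ℕ):ℝ)+2) := by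
    rw [hJ]; push_cast; ring
  by_cases hk4 : k < 4*q
  · -- small k : spacing = 2
    have hsp : spacing q k = 2 := if_pos hk4
    rw [hsp]
    refine ⟨le_rfl, ⟨1, rfl⟩, ?_, ?_⟩
    · -- k + 1 ≤ ⌈δ k⌉
      have h1 : (k:ℝ) < δ*(k:ℝ) := by nlinarith
      have h2 : (k:ℝ) < ((⌈δ*k⌉₊:ℕ):ℝ) := by linarith
      have h3 : k < ⌈δ*k⌉₊ := by exact_mod_cast h2
      push_cast
      omega
    · -- ⌈Δ k⌉ < 2 (Jm + 1)
      have hkR : (k:ℝ) + 1 ≤ 4*(q:ℝ) := by exact_mod_cast hk4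
      have h1 : Δ*(k:ℝ) ≤ Δ*(4*(q:ℝ)) := by nlinarith
      have h2 : ((⌈Δ*k⌉₊:ℕ):ℝ) < 2*(((Jm:ℕ):ℝ)+1) := by
        rw [hJmR]
        nlinarith
      have h3 : ((⌈Δ*k⌉₊:ℕ):ℤ) < 2*((Jm:ℤ)+1) := by exact_mod_cast h2
      push_cast at h3 ⊢
      omega
  · -- large k : spacing = 2 * (k / (2q))
    have hsp : spacing q k = 2*(k/(2*q)) := if_neg hk4
    push_neg at hk4
    obtain ⟨D, hD⟩ : ∃ D, k/(2*q) = D := ⟨_, rfl⟩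
    rw [hD] at hsp
    obtain ⟨R, hR⟩ : ∃ R, k % (2*q) = R := ⟨_, rfl⟩
    have hdm : 2*q*D + R = k := by rw [← hD, ← hR]; exact Nat.div_add_mod k (2*q)
    have hrlt : R < 2*q := by rw [← hR]; exact Nat.mod_lt _ (by omega)
    have hd2 : 2 ≤ D := by
      by_contra hcon
      push_neg at hcon
      have h1 : D ≤ 1 := by omega
      have h2 : 2*q*D ≤ 2*q*1 := Nat.mul_le_mul_left _ h1
      omega
    have hDM : 2*(q:ℝ)*(D:ℝ) + (R:ℝ) = (k:ℝ) := by exact_mod_cast hdm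
    have hR0 : (0:ℝ) ≤ (R:ℝ) := by positivity
    have hRlt : (R:ℝ) < 2*(q:ℝ) := by exact_mod_cast hrlt
    have hD2 : (2:ℝ) ≤ (D:ℝ) := by exact_mod_cast hd2
    have hQ0 : (0:ℝ) < (q:ℝ) := by linarith
    have hA : (4:ℝ)*(k:ℝ) ≤ (δ-1)*(q:ℝ)*(k:ℝ) := by
      have := mul_le_mul_of_nonneg_right hq4 (by positivity : (0:ℝ) ≤ (k:ℝ))
      linarith
    have hBq : 4*(D:ℝ)*(q:ℝ) ≤ 2*(k:ℝ) := by linarith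
    have hX : 0 ≤ (δ-1)*(k:ℝ) - 4*(D:ℝ) := by
      by_contra hcon
      push_neg at hcon
      have hneg := mul_neg_of_neg_of_pos hcon hQ0
      nlinarith [hA, hBq, hM1]
    rw [hsp]
    refine ⟨by omega, dvd_mul_right 2 D, ?_, ?_⟩
    · have hreal : (k:ℝ) + 2*((2*D : ℕ):ℝ) - 3 ≤ ((⌈δ*k⌉₊:ℕ):ℝ) := by
        push_cast
        linarith [hX, hδk_le]
      exact_mod_cast hreal
    · have h2QD : (q:ℝ)*2 ≤ (q:ℝ)*(D:ℝ) :=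
        mul_le_mul_of_nonneg_left hD2 (le_of_lt hQ0)
      have hM3 : (k:ℝ) < 3*(q:ℝ)*(D:ℝ) := by linarith
      have hΔM : Δ*1 ≤ Δ*(k:ℝ) := mul_le_mul_of_nonneg_left hM1 (by linarith)
      have hmulA := mul_le_mul_of_nonneg_left hceilΔ (by positivity : (0:ℝ) ≤ 4*(k:ℝ))
      have hT1 : 3*(Δ*(k:ℝ) + 1) ≤ 4*(k:ℝ)*(((⌈Δ⌉₊:ℕ):ℝ) + 2) := by
        have hΔ0' : (0:ℝ) ≤ Δ := by linarith
        nlinarith [hmulA, hΔM, hM1, hδ, hΔ]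
      have hA2 : (0:ℝ) < ((⌈Δ⌉₊:ℕ):ℝ) + 2 := by linarith
      have hmulB := mul_le_mul_of_nonneg_right (le_of_lt hM3) (le_of_lt hA2)
      have hT2 : 4*(k:ℝ)*(((⌈Δ⌉₊:ℕ):ℝ)+2) ≤ 12*(q:ℝ)*(D:ℝ)*(((⌈Δ⌉₊:ℕ):ℝ)+2) := by
        nlinarith [hmulB]
      have hEq : ((2*D : ℕ):ℝ) * (((Jm:ℕ):ℝ) + 1)
          = 4*(q:ℝ)*(D:ℝ)*(((⌈Δ⌉₊:ℕ):ℝ)+2) + 2*(D:ℝ) := by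
        push_cast
        rw [hJmR]
        ring
      have hfin : ((⌈Δ*k⌉₊:ℕ):ℝ) < ((2*D : ℕ):ℝ) * (((Jm:ℕ):ℝ) + 1) := by
        rw [hEq]
        linarith [hΔk_lt, hT1, hT2, hD2]
      exact_mod_cast hfin

lemma boxEdges_subset {a b c d A B C D : ℤ} (h1 : A ≤ a) (h2 : b ≤ B) (h3 : C ≤ c)
    (h4 : d ≤ D) : boxEdges a b c d ⊆ boxEdges A B C D := by
  intro e he
  simp only [boxEdges, Finset.mem_product, Finset.mem_Icc, Finset.mem_univ, and_true] at he ⊢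
  omega

lemma determined_CV (a b c d : ℤ) :
    DeterminedBy {ω | CrossedVert ω a b c d} (boxEdges a b c d) :=
  determined_cross (fun x => x.2 = c) (fun y => y.2 = d) a b c d

lemma determined_LR (a b c d : ℤ) :
    DeterminedBy {ω | CrossedLR ω a b c d} (boxEdges a b c d) :=
  determined_cross (fun x => x.1 = a) (fun y => y.1 = b) a b c d

lemma determined_RL (a b c d : ℤ) :
    DeterminedBy {ω | CrossedRL ω a b c d} (boxEdges a b c d) :=
  determined_cross (fun x => x.1 = b) (fun y => y.1 = a) a b c d

lemma incr_CV (a b c d : ℤ) : Incr {ω | CrossedVert ω a b c d} :=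
  incr_cross (fun x => x.2 = c) (fun y => y.2 = d) a b c d

lemma incr_LR (a b c d : ℤ) : Incr {ω | CrossedLR ω a b c d} :=
  incr_cross (fun x => x.1 = a) (fun y => y.1 = b) a b c d

lemma incr_RL (a b c d : ℤ) : Incr {ω | CrossedRL ω a b c d} :=
  incr_cross (fun x => x.1 = b) (fun y => y.1 = a) a b c d

lemma prob_toReal_le_one {μ : Measure Config} (hP : IsProbabilityMeasure μ) (A : Set Config) :
    (μ A).toReal ≤ 1 := by
  have := ENNReal.toReal_mono (ENNReal.one_ne_top) (prob_le_one (μ := μ) (s := A))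
  simpa using this

lemma measure_vert_box2 {μ : Measure Config} {p : ℝ} (hB : IsBernoulli μ p)
    (w n' : ℕ) (t u b' d' : ℤ) (hEven : Even (t + u)) (hb : b' = t + w) (hd : d' = u + n') :
    (μ {ω | CrossedVert ω t b' u d'}).toReal = V μ w n' := by
  subst hb hd
  exact measure_vert_box hB w n' t u hEven

lemma measure_lr_box2 {μ : Measure Config} {p : ℝ} (hB : IsBernoulli μ p)
    (m' h' : ℕ) (t u b' d' : ℤ) (hEven : Even (t + u)) (hb : b' = t + m') (hd : d' = u + h') :
    (μ {ω | CrossedLR ω t b' u d'}).toReal = H μ m' h' := by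
  subst hb hd
  exact measure_lr_box hB m' h' t u hEven

lemma measure_rl_box2 {μ : Measure Config} {p : ℝ} (hB : IsBernoulli μ p)
    (m' h' : ℕ) (t u b' d' : ℤ) (hEven : Even (t + m' + u)) (hb : b' = t + m')
    (hd : d' = u + h') :
    (μ {ω | CrossedRL ω t b' u d'}).toReal = H μ m' h' := by
  subst hb hd
  exact measure_rl_box hB m' h' t u hEven


/-- Lemma: easy-direction comparison of aspect ratios.
For any `Δ > δ > 1` there is `C > 0` such that for all `m, n ≥ 1`,
`max{V_p(Δm, n), H_p(m, Δn)} ≤ 1 - (1 - max{V_p(δm, n), H_p(m, δn)})^C`,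
real arguments being interpreted via ceilings. -/
theorem aspect_ratio_comparison (μ : Measure Config) (p : ℝ) (hB : IsBernoulli μ p)
    (Δ δ : ℝ) (hδ : 1 < δ) (hΔ : δ < Δ) :
    ∃ C : ℕ, 0 < C ∧ ∀ m n : ℕ, 1 ≤ m → 1 ≤ n →
      max (V μ ⌈Δ * m⌉₊ n) (H μ m ⌈Δ * n⌉₊)
        ≤ 1 - (1 - max (V μ ⌈δ * m⌉₊ n) (H μ m ⌈δ * n⌉₊)) ^ C := by
  obtain ⟨hprob, hp01, -⟩ := id hB
  obtain ⟨q, hqdef⟩ : ∃ q : ℕ, q = ⌈(4:ℝ)/(δ-1)⌉₊ + 1 := ⟨_, rfl⟩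
  obtain ⟨Jm, hJdef⟩ : ∃ Jm : ℕ, Jm = 2*q*(⌈Δ⌉₊+2) := ⟨_, rfl⟩
  refine ⟨3*Jm + 6, by omega, ?_⟩
  intro m n hm hn
  obtain ⟨hs2m, hsdm, hwm, hWm⟩ := key_arith δ Δ hδ hΔ q Jm hqdef hJdef m hm
  obtain ⟨hs2n, hsdn, hwn, hWn⟩ := key_arith δ Δ hδ hΔ q Jm hqdef hJdef n hn
  set x := max (V μ ⌈δ * m⌉₊ n) (H μ m ⌈δ * n⌉₊) with hxdef
  have hx0 : 0 ≤ x := le_trans ENNReal.toReal_nonneg (le_max_left _ _)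
  have hx1 : x ≤ 1 := max_le (prob_toReal_le_one hprob _) (prob_toReal_le_one hprob _)
  have hs2mz : (2:ℤ) ≤ (spacing q m : ℤ) := by exact_mod_cast hs2m
  have hs2nz : (2:ℤ) ≤ (spacing q n : ℤ) := by exact_mod_cast hs2n
  have hEvenSpm : Even (spacing q m) := (even_iff_two_dvd).mpr hsdm
  have hEvenSpn : Even (spacing q n) := (even_iff_two_dvd).mpr hsdn
  have hhn1 : (n:ℤ) + 1 ≤ ((⌈δ * n⌉₊ : ℕ) : ℤ) := by omega
  apply max_le
  · -- vertical part
    set sp := spacing q m with hspdef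
    set B : ℤ := if Even m then 0 else -1 with hBdef
    have hB0 : -1 ≤ B ∧ B ≤ 0 := by rw [hBdef]; split <;> omega
    obtain ⟨R, hRdef⟩ : ∃ R : ℕ,
        R = sp*(Jm+2) + ⌈δ * m⌉₊ + m + ⌈δ * n⌉₊ + n + ⌈Δ * m⌉₊ + 5 := ⟨_, rfl⟩
    have hmul : ∀ i : ℕ, i ≤ Jm + 2 → sp*i ≤ sp*(Jm+2) :=
      fun i hi => Nat.mul_le_mul_left _ hi
    set lV : List (Set Config) :=
      ((List.range (Jm+1)).map fun j => {ω : Config |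
          CrossedVert ω ((sp*j : ℕ) : ℤ) (((sp*j : ℕ) : ℤ) + (⌈δ * m⌉₊ : ℕ)) 0 (n:ℤ)})
      ++ ((List.range (Jm+2)).map fun k => {ω : Config |
          CrossedLR ω ((sp*k : ℕ) : ℤ) (((sp*k : ℕ) : ℤ) + (m:ℤ)) 0 ((⌈δ * n⌉₊ : ℕ) : ℤ)})
      ++ ((List.range (Jm+2)).map fun k => {ω : Config |
          CrossedRL ω ((sp*k : ℕ) : ℤ) (((sp*k : ℕ) : ℤ) + (m:ℤ)) B (B + (⌈δ * n⌉₊ : ℕ))})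
      with hlVdef
    have hl : ∀ A ∈ lV, DeterminedBy A (boxEdges (-(R:ℤ)) R (-(R:ℤ)) R) ∧ Incr A := by
      intro A hA
      rw [hlVdef] at hA
      simp only [List.mem_append, List.mem_map, List.mem_range] at hA
      rcases hA with (⟨j, hj, rfl⟩ | ⟨k, hk, rfl⟩) | ⟨k, hk, rfl⟩
      · have h1 := hmul j (by omega)
        refine ⟨(determined_CV _ _ _ _).mono (boxEdges_subset ?_ ?_ ?_ ?_), incr_CV _ _ _ _⟩
          <;> [skip; skip; skip; skip] <;> omega
      · have h1 := hmul k (by omega)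
        refine ⟨(determined_LR _ _ _ _).mono (boxEdges_subset ?_ ?_ ?_ ?_), incr_LR _ _ _ _⟩
          <;> omega
      · have h1 := hmul k (by omega)
        refine ⟨(determined_RL _ _ _ _).mono (boxEdges_subset ?_ ?_ ?_ ?_), incr_RL _ _ _ _⟩
          <;> omega
    have hLdet : DeterminedBy {ω : Config | CrossedVert ω 0 ((⌈Δ * m⌉₊ : ℕ) : ℤ) 0 (n:ℤ)}
        (boxEdges (-(R:ℤ)) R (-(R:ℤ)) R) :=
      (determined_CV _ _ _ _).mono (boxEdges_subset (by omega) (by omega) (by omega) (by omega))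
    have hsub : ∀ ω, ω ∈ {ω : Config | CrossedVert ω 0 ((⌈Δ * m⌉₊ : ℕ) : ℤ) 0 (n:ℤ)} →
        ∃ A ∈ lV, ω ∈ A := by
      intro ω hω
      have hdec := vert_decomp ω m n ⌈Δ * m⌉₊ ⌈δ * m⌉₊ ⌈δ * n⌉₊ sp Jm hs2m hwm hhn1 hWm hω
      rw [hlVdef]
      rcases hdec with ⟨j, hj, hev⟩ | ⟨k, hk, hev⟩ | ⟨k, hk, hev⟩
      · exact ⟨_, by
          simp only [List.mem_append, List.mem_map, List.mem_range]
          exact Or.inl (Or.inl ⟨j, by omega, rfl⟩), hev⟩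
      · exact ⟨_, by
          simp only [List.mem_append, List.mem_map, List.mem_range]
          exact Or.inl (Or.inr ⟨k, by omega, rfl⟩), hev⟩
      · exact ⟨_, by
          simp only [List.mem_append, List.mem_map, List.mem_range]
          exact Or.inr ⟨k, by omega, rfl⟩, hev⟩
    have hxA : ∀ A ∈ lV, (μ A).toReal ≤ x := by
      intro A hA
      rw [hlVdef] at hA
      simp only [List.mem_append, List.mem_map, List.mem_range] at hA
      rcases hA with (⟨j, hj, rfl⟩ | ⟨k, hk, rfl⟩) | ⟨k, hk, rfl⟩
      · rw [measure_vert_box2 hB ⌈δ * m⌉₊ n ((sp*j : ℕ) : ℤ) 0 _ _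
          (by simpa using Int.even_coe_nat _ |>.mpr (hEvenSpm.mul_right j)) rfl (by simp)]
        exact le_max_left _ _
      · rw [measure_lr_box2 hB m ⌈δ * n⌉₊ ((sp*k : ℕ) : ℤ) 0 _ _
          (by simpa using Int.even_coe_nat _ |>.mpr (hEvenSpm.mul_right k)) rfl (by simp)]
        exact le_max_right _ _
      · rw [measure_rl_box2 hB m ⌈δ * n⌉₊ ((sp*k : ℕ) : ℤ) B _ _ ?_ rfl rfl]
        · exact le_max_right _ _
        · have h2 : (2:ℤ) ∣ ((sp*k : ℕ) : ℤ) :=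
            Int.natCast_dvd_natCast.mpr (Dvd.dvd.mul_right hsdm k)
          rw [Int.even_iff]
          rw [hBdef]
          by_cases hEm : Even m
          · rw [if_pos hEm]
            rw [Nat.even_iff] at hEm
            omega
          · rw [if_neg hEm]
            rw [Nat.even_iff] at hEm
            omega
    have hlen : lV.length ≤ 3*Jm + 6 := by
      rw [hlVdef]
      simp only [List.length_append, List.length_map, List.length_range]
      omega
    exact union_bound_fkg hB _ lV hl _ hLdet hsub x hx0 hx1 hxA (3*Jm+6) hlen
  · -- horizontal part
    set sp := spacing q n with hspdef
    obtain ⟨R, hRdef⟩ : ∃ R : ℕ,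
        R = sp*(Jm+2) + ⌈δ * m⌉₊ + m + ⌈δ * n⌉₊ + n + ⌈Δ * n⌉₊ + 5 := ⟨_, rfl⟩
    have hmul : ∀ i : ℕ, i ≤ Jm + 2 → sp*i ≤ sp*(Jm+2) :=
      fun i hi => Nat.mul_le_mul_left _ hi
    set lH : List (Set Config) :=
      ((List.range (Jm+1)).map fun j => {ω : Config |
          CrossedLR ω 0 (m:ℤ) ((sp*j : ℕ) : ℤ) (((sp*j : ℕ) : ℤ) + (⌈δ * n⌉₊ : ℕ))})
      ++ ((List.range (Jm+2)).map fun k => {ω : Config |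
          CrossedVert ω 0 ((⌈δ * m⌉₊ : ℕ) : ℤ) ((sp*k : ℕ) : ℤ) (((sp*k : ℕ) : ℤ) + (n:ℤ))})
      with hlHdef
    have hl : ∀ A ∈ lH, DeterminedBy A (boxEdges (-(R:ℤ)) R (-(R:ℤ)) R) ∧ Incr A := by
      intro A hA
      rw [hlHdef] at hA
      simp only [List.mem_append, List.mem_map, List.mem_range] at hA
      rcases hA with ⟨j, hj, rfl⟩ | ⟨k, hk, rfl⟩
      · have h1 := hmul j (by omega)
        refine ⟨(determined_LR _ _ _ _).mono (boxEdges_subset ?_ ?_ ?_ ?_), incr_LR _ _ _ _⟩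
          <;> omega
      · have h1 := hmul k (by omega)
        refine ⟨(determined_CV _ _ _ _).mono (boxEdges_subset ?_ ?_ ?_ ?_), incr_CV _ _ _ _⟩
          <;> omega
    have hLdet : DeterminedBy {ω : Config | CrossedLR ω 0 (m:ℤ) 0 ((⌈Δ * n⌉₊ : ℕ) : ℤ)}
        (boxEdges (-(R:ℤ)) R (-(R:ℤ)) R) :=
      (determined_LR _ _ _ _).mono (boxEdges_subset (by omega) (by omega) (by omega) (by omega))
    have hmw : (m:ℤ) ≤ ((⌈δ * m⌉₊ : ℕ) : ℤ) := by omega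
    have hsub : ∀ ω, ω ∈ {ω : Config | CrossedLR ω 0 (m:ℤ) 0 ((⌈Δ * n⌉₊ : ℕ) : ℤ)} →
        ∃ A ∈ lH, ω ∈ A := by
      intro ω hω
      have hdec := horiz_decomp ω m n ⌈Δ * n⌉₊ ⌈δ * m⌉₊ ⌈δ * n⌉₊ sp Jm hs2n hmw hwn hWn hω
      rw [hlHdef]
      rcases hdec with ⟨j, hj, hev⟩ | ⟨k, hk, hev⟩
      · exact ⟨_, by
          simp only [List.mem_append, List.mem_map, List.mem_range]
          exact Or.inl ⟨j, by omega, rfl⟩, hev⟩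
      · exact ⟨_, by
          simp only [List.mem_append, List.mem_map, List.mem_range]
          exact Or.inr ⟨k, by omega, rfl⟩, hev⟩
    have hxA : ∀ A ∈ lH, (μ A).toReal ≤ x := by
      intro A hA
      rw [hlHdef] at hA
      simp only [List.mem_append, List.mem_map, List.mem_range] at hA
      rcases hA with ⟨j, hj, rfl⟩ | ⟨k, hk, rfl⟩
      · rw [measure_lr_box2 hB m ⌈δ * n⌉₊ 0 ((sp*j : ℕ) : ℤ) _ _
          (by simpa using Int.even_coe_nat _ |>.mpr (hEvenSpn.mul_right j)) (by simp) rfl]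
        exact le_max_right _ _
      · rw [measure_vert_box2 hB ⌈δ * m⌉₊ n 0 ((sp*k : ℕ) : ℤ) _ _
          (by simpa using Int.even_coe_nat _ |>.mpr (hEvenSpn.mul_right k)) (by simp) rfl]
        exact le_max_left _ _
    have hlen : lH.length ≤ 3*Jm + 6 := by
      rw [hlHdef]
      simp only [List.length_append, List.length_map, List.length_range]
      omega
    exact union_bound_fkg hB _ lH hl _ hLdet hsub x hx0 hx1 hxA (3*Jm+6) hlen


end OrientedPerc
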